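/- Let f : ℝ → [0,∞] be lower semicontinuous and convex with f(0) < ∞ and f(0) ≠ 1. Then inf_k limsup_{n→∞} (1/n) log ℙ(M_n ∈ V_k(f)) = −∞; that is, I_M(f) = ∞. -/

import Mathlib

open MeasureTheory Filter Metric Set
open scoped ENNReal Classical

noncomputable section

/-- Epigraph of an extended-real-valued function on `ℝ`, as a subset of `ℝ²`
(which carries the box metric `dist p q = max |p₁-q₁| |p₂-q₂|`). -/
def epiE (f : ℝ → EReal) : Set (ℝ × ℝ) := {p | f p.1 ≤ (p.2 : EReal)}

/-- `awGap A B r` is `sup_{x ∈ B̄_r} |dist(x,A) - dist(x,B)|`. -/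
def awGap (A B : Set (ℝ × ℝ)) (r : ℝ) : ℝ :=
  sSup ((fun x => |infDist x A - infDist x B|) '' closedBall (0 : ℝ × ℝ) r)

/-- Attouch–Wets convergence of a sequence of functions, via epigraphs. -/
def AWTendsto (F : ℕ → ℝ → EReal) (f : ℝ → EReal) : Prop :=
  ∀ r : ℝ, 0 < r → Tendsto (fun n => awGap (epiE (F n)) (epiE f) r) atTop (nhds 0)

/-- The basic Attouch–Wets neighbourhood `V_k(f)`. -/
def Vk (k : ℕ) (f : ℝ → EReal) : Set (ℝ → EReal) :=
  {g | awGap (epiE g) (epiE f) (k : ℝ) < 1 / (k : ℝ)}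

/-- Convexity for extended-real-valued functions on `ℝ`. -/
def ERConvex (f : ℝ → EReal) : Prop :=
  ∀ x y a b : ℝ, 0 ≤ a → 0 ≤ b → a + b = 1 →
    f (a * x + b * y) ≤ (a : EReal) * f x + (b : EReal) * f y

/-- Effective domain of an extended-real-valued function. -/
def effDom (f : ℝ → EReal) : Set ℝ := {θ | f θ < ⊤}

/-- The moment generating function of a measure on `ℝ`, with values in `(0,∞]`. -/
def mgfE (ν : Measure ℝ) : ℝ → EReal :=
  fun θ => ((∫⁻ x, ENNReal.ofReal (Real.exp (θ * x)) ∂ν : ℝ≥0∞) : EReal)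

/-- `log` of a probability, with the convention `log 0 = -∞`. -/
def elog (p : ℝ≥0∞) : EReal := if p = 0 then ⊥ else ((Real.log p.toReal : ℝ) : EReal)

/-- The empirical moment generating function estimator
`M_n(θ) = (1/n) ∑_{i<n} exp (θ X_i)`. -/
def Mn {Ω : Type*} (X : ℕ → Ω → ℝ) (n : ℕ) (ω : Ω) : ℝ → EReal :=
  fun θ => (((n : ℝ)⁻¹ * ∑ i ∈ Finset.range n, Real.exp (θ * X i ω) : ℝ) : EReal)

/-- The rate value `I_M(f) = -inf_{k ≥ 1} limsup_n (1/n) log ℙ(M_n ∈ V_k(f))`. -/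
def IM {Ω : Type*} [MeasurableSpace Ω] (P : Measure Ω) (X : ℕ → Ω → ℝ)
    (f : ℝ → EReal) : EReal :=
  - ⨅ k ∈ Set.Ici 1, limsup
      (fun n : ℕ => (((n : ℝ)⁻¹ : ℝ) : EReal) * elog (P {ω | Mn X n ω ∈ Vk k f})) atTop

/-- `f` is lower semicontinuous, convex and `[0,∞]`-valued. -/
def IsAdm0 (f : ℝ → EReal) : Prop :=
  LowerSemicontinuous f ∧ ERConvex f ∧ ∀ θ, 0 ≤ f θ

/-! ### Auxiliary lemmas -/

lemma ereal_eq_bot_of_forall_le (x : EReal) (h : ∀ r : ℝ, x ≤ (r : EReal)) : x = ⊥ := by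
  induction x using EReal.rec with
  | bot => rfl
  | coe y => exact absurd (EReal.coe_le_coe_iff.mp (h (y - 1))) (by linarith)
  | top => exact absurd (h 0) (by simp)

lemma abs_infDist_sub_le_awGap {A B : Set (ℝ × ℝ)} {r : ℝ} {x : ℝ × ℝ}
    (hx : x ∈ closedBall (0 : ℝ × ℝ) r) :
    |infDist x A - infDist x B| ≤ awGap A B r := by
  have lip : ∀ (C : Set (ℝ × ℝ)) (y : ℝ × ℝ), |infDist y C - infDist 0 C| ≤ dist y 0 := by
    intro C y
    rw [abs_sub_le_iff]
    constructor
    · linarith [infDist_le_infDist_add_dist (s := C) (x := y) (y := (0 : ℝ × ℝ))]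
    · have h := infDist_le_infDist_add_dist (s := C) (x := (0 : ℝ × ℝ)) (y := y)
      rw [dist_comm] at h; linarith
  apply le_csSup
  · refine ⟨|infDist 0 A - infDist 0 B| + 2 * r, ?_⟩
    rintro v ⟨y, hy, rfl⟩
    have hy' : dist y (0 : ℝ × ℝ) ≤ r := mem_closedBall.mp hy
    have h1 := lip A y
    have h2 : |infDist 0 B - infDist y B| ≤ dist y 0 := by
      rw [abs_sub_comm]; exact lip B y
    have heq : infDist y A - infDist y B =
        (infDist y A - infDist 0 A) + (infDist 0 A - infDist 0 B)
          + (infDist 0 B - infDist y B) := by ring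
    show |infDist y A - infDist y B| ≤ |infDist 0 A - infDist 0 B| + 2 * r
    rw [heq]
    calc |(infDist y A - infDist 0 A) + (infDist 0 A - infDist 0 B)
          + (infDist 0 B - infDist y B)|
        ≤ |infDist y A - infDist 0 A| + |infDist 0 A - infDist 0 B|
          + |infDist 0 B - infDist y B| := abs_add_three _ _ _
      _ ≤ |infDist 0 A - infDist 0 B| + 2 * r := by linarith
  · exact ⟨x, hx, rfl⟩

lemma choose_le_two_pow (n m : ℕ) : n.choose m ≤ 2 ^ n := by
  rcases le_or_gt m n with h | h
  · calc n.choose m ≤ ∑ j ∈ Finset.range (n + 1), n.choose j :=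
        Finset.single_le_sum (fun _ _ => Nat.zero_le _)
          (Finset.mem_range.mpr (Nat.lt_succ_of_le h))
    _ = 2 ^ n := Nat.sum_range_choose n
  · rw [Nat.choose_eq_zero_of_lt h]; exact Nat.zero_le _

lemma count_big (n : ℕ) (γ : ℝ) (hγ0 : 0 < γ) (hγ1 : γ ≤ 1) (u : ℕ → ℝ)
    (h : ∑ i ∈ Finset.range n, Real.exp (u i) ≤ n * (1 - γ)) :
    γ / 2 * n ≤ (((Finset.range n).filter (fun i => u i ≤ -(γ/2))).card : ℝ) := by
  set S := (Finset.range n).filter (fun i => u i ≤ -(γ/2)) with hS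
  set Sc := (Finset.range n).filter (fun i => ¬ (u i ≤ -(γ/2))) with hSc
  have hcard : S.card + Sc.card = n := by
    have := Finset.card_filter_add_card_filter_not
      (s := Finset.range n) (p := fun i => u i ≤ -(γ/2))
    simpa [hS, hSc] using this
  have h1 : (Sc.card : ℝ) * (1 - γ/2) ≤ ∑ i ∈ Finset.range n, Real.exp (u i) := by
    have hmono : ∑ i ∈ Sc, Real.exp (u i) ≤ ∑ i ∈ Finset.range n, Real.exp (u i) :=
      Finset.sum_le_sum_of_subset_of_nonneg (Finset.filter_subset _ _)
        (fun i _ _ => (Real.exp_pos _).le)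
    refine le_trans ?_ hmono
    have hterm : ∀ i ∈ Sc, (1 - γ/2) ≤ Real.exp (u i) := by
      intro i hi
      have hui : -(γ/2) < u i := by
        have h' := (Finset.mem_filter.mp hi).2
        push_neg at h'; exact h'
      have := Real.add_one_le_exp (u i)
      linarith
    have := Finset.card_nsmul_le_sum Sc (fun i => Real.exp (u i)) (1 - γ/2) hterm
    simpa [nsmul_eq_mul] using this
  have h2 : (Sc.card : ℝ) * (1 - γ/2) ≤ (n : ℝ) * (1 - γ) := le_trans h1 h
  have hc : (S.card : ℝ) + (Sc.card : ℝ) = (n : ℝ) := by exact_mod_cast hcard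
  have hn0 : (0 : ℝ) ≤ (n : ℝ) := Nat.cast_nonneg n
  have h3 : (Sc.card : ℝ) ≤ (n : ℝ) * (1 - γ/2) := by
    have hpos : 0 < 1 - γ/2 := by linarith
    nlinarith [sq_nonneg γ]
  linarith

lemma prob_bound {Ω : Type*} [MeasurableSpace Ω] (P : Measure Ω) [IsProbabilityMeasure P]
    (X : ℕ → Ω → ℝ) (μ : Measure ℝ)
    (hmeas : ∀ i, Measurable (X i))
    (hid : ∀ i, Measure.map (X i) P = μ)
    (hindep : ProbabilityTheory.iIndepFun X P)
    (L : ℝ) (n m : ℕ) :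
    P {ω | m ≤ ((Finset.range n).filter (fun i => L ≤ |X i ω|)).card}
      ≤ 2 ^ n * (μ {x | L ≤ |x|}) ^ m := by
  set B : Set ℝ := {x | L ≤ |x|} with hBdef
  have hB : MeasurableSet B := measurableSet_le measurable_const measurable_abs
  have hsub : {ω | m ≤ ((Finset.range n).filter (fun i => L ≤ |X i ω|)).card}
      ⊆ ⋃ T ∈ Finset.powersetCard m (Finset.range n), ⋂ i ∈ T, X i ⁻¹' B := by
    intro ω hω
    obtain ⟨T, hTsub, hTcard⟩ := Finset.exists_subset_card_eq hω
    refine Set.mem_iUnion₂.mpr ⟨T, ?_, ?_⟩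
    · exact Finset.mem_powersetCard.mpr ⟨hTsub.trans (Finset.filter_subset _ _), hTcard⟩
    · exact Set.mem_iInter₂.mpr (fun i hi => (Finset.mem_filter.mp (hTsub hi)).2)
  calc P {ω | m ≤ ((Finset.range n).filter (fun i => L ≤ |X i ω|)).card}
      ≤ P (⋃ T ∈ Finset.powersetCard m (Finset.range n), ⋂ i ∈ T, X i ⁻¹' B) :=
        measure_mono hsub
    _ ≤ ∑ T ∈ Finset.powersetCard m (Finset.range n), P (⋂ i ∈ T, X i ⁻¹' B) :=
        measure_biUnion_finset_le _ _
    _ = ∑ _T ∈ Finset.powersetCard m (Finset.range n), (μ B) ^ m := by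
        refine Finset.sum_congr rfl (fun T hT => ?_)
        rw [hindep.measure_inter_preimage_eq_mul T (sets := fun _ => B) (fun i _ => hB)]
        have hX : ∀ i, P (X i ⁻¹' B) = μ B := fun i => by
          rw [← hid i, Measure.map_apply (hmeas i) hB]
        rw [Finset.prod_congr rfl (fun i _ => hX i), Finset.prod_const,
          (Finset.mem_powersetCard.mp hT).2]
    _ = ((Finset.powersetCard m (Finset.range n)).card : ℝ≥0∞) * (μ B) ^ m := by
        rw [Finset.sum_const, nsmul_eq_mul]
    _ ≤ 2 ^ n * (μ B) ^ m := by
        refine mul_le_mul_left ?_ _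
        rw [Finset.card_powersetCard, Finset.card_range]
        exact_mod_cast choose_le_two_pow n m

set_option maxHeartbeats 1000000 in
/-- Functions whose value at the origin is not `1` have infinite rate. -/
theorem infinite_rate_of_ne_one
    {Ω : Type*} [MeasurableSpace Ω] (P : Measure Ω) [IsProbabilityMeasure P]
    (X : ℕ → Ω → ℝ) (μ : Measure ℝ) [IsProbabilityMeasure μ]
    (hmeas : ∀ i, Measurable (X i))
    (hid : ∀ i, Measure.map (X i) P = μ)
    (hindep : ProbabilityTheory.iIndepFun X P)
    (f : ℝ → EReal) (hlsc : LowerSemicontinuous f) (hconv : ERConvex f)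
    (hnn : ∀ θ, 0 ≤ f θ) (hfin : f 0 < ⊤) (hne : f 0 ≠ 1) :
    (⨅ k ∈ Set.Ici 1, limsup
        (fun n : ℕ => (((n : ℝ)⁻¹ : ℝ) : EReal) *
          elog (P {ω | Mn X n ω ∈ Vk k f})) atTop) = ⊥ ∧
    IM P X f = ⊤ := by
  -- basic facts
  have hbotne : f 0 ≠ ⊥ := by
    intro h
    have := hnn 0
    rw [h] at this
    exact absurd this (by simp)
  set c : ℝ := (f 0).toReal with hcdef
  have hcoe : ((c : ℝ) : EReal) = f 0 := EReal.coe_toReal hfin.ne hbotne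
  have hc_nn : 0 ≤ c := by
    have h0 := hnn 0
    rw [← hcoe] at h0
    exact_mod_cast h0
  have hMn0 : ∀ n : ℕ, 1 ≤ n → ∀ ω, Mn X n ω 0 = ((1 : ℝ) : EReal) := by
    intro n hn ω
    have hn0 : (n : ℝ) ≠ 0 := Nat.cast_ne_zero.mpr (by omega)
    simp only [Mn, zero_mul, Real.exp_zero, Finset.sum_const, Finset.card_range,
      nsmul_eq_mul, mul_one, inv_mul_cancel₀ hn0]
  have hepiF_ne : (epiE f).Nonempty :=
    ⟨(0, c), by simpa only [epiE, Set.mem_setOf_eq, hcoe] using le_refl (f 0)⟩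
  -- the key claim
  suffices key : ∀ r : ℝ, ∃ k : ℕ, k ∈ Set.Ici 1 ∧
      limsup (fun n : ℕ => (((n : ℝ)⁻¹ : ℝ) : EReal) *
        elog (P {ω | Mn X n ω ∈ Vk k f})) atTop ≤ (r : EReal) by
    have hbot' : (⨅ k ∈ Set.Ici 1, limsup
        (fun n : ℕ => (((n : ℝ)⁻¹ : ℝ) : EReal) *
          elog (P {ω | Mn X n ω ∈ Vk k f})) atTop) = ⊥ := by
      apply ereal_eq_bot_of_forall_le
      intro r
      obtain ⟨k, hk, hlim⟩ := key r
      exact le_trans (iInf₂_le k hk) hlim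
    refine ⟨hbot', ?_⟩
    unfold IM
    rw [hbot']
    rfl
  intro r
  rcases lt_or_gt_of_ne hne with hlt | hgt
  · -- CASE f 0 < 1 : probabilistic bound
    have hc_lt : c < 1 := by
      rw [← hcoe] at hlt
      exact_mod_cast hlt
    set t : ℝ := (c + 1) / 2 with htdef
    set γ : ℝ := (1 - c) / 4 with hγdef
    have hγpos : 0 < γ := by rw [hγdef]; linarith
    have hγ1 : γ ≤ 1 := by rw [hγdef]; linarith
    have hct : c ≤ t := by rw [htdef]; linarith
    have ht1 : t ≤ 1 := by rw [htdef]; linarith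
    have ht0 : 0 ≤ t := le_trans hc_nn hct
    have htγ : t + γ = 1 - γ := by rw [htdef, hγdef]; ring
    set q : ℝ := min 0 ((r - Real.log 2) / (γ / 2)) with hqdef
    set B : ℕ → Set ℝ := fun k => {x | γ * k / 2 ≤ |x|} with hBdef
    have hBmeas : ∀ k, MeasurableSet (B k) := fun k =>
      measurableSet_le measurable_const measurable_abs
    have hBanti : Antitone B := by
      intro k k' hkk' x hx
      simp only [hBdef, Set.mem_setOf_eq] at hx ⊢
      have hkk : (k : ℝ) ≤ k' := by exact_mod_cast hkk'
      nlinarith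
    have hBempty : (⋂ k, B k) = ∅ := by
      ext x
      simp only [Set.mem_iInter, Set.mem_empty_iff_false, iff_false, not_forall,
        hBdef, Set.mem_setOf_eq, not_le]
      obtain ⟨K, hK⟩ := exists_nat_gt (2 * |x| / γ)
      refine ⟨K, ?_⟩
      rw [div_lt_iff₀ hγpos] at hK
      linarith
    have htend : Tendsto (fun k => μ (B k)) atTop (nhds 0) := by
      have h := MeasureTheory.tendsto_measure_iInter_atTop (μ := μ)
        (fun k => (hBmeas k).nullMeasurableSet) hBanti ⟨0, measure_ne_top μ _⟩
      rw [hBempty, measure_empty] at h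
      exact h
    have hev : ∀ᶠ k in atTop, μ (B k) < ENNReal.ofReal (Real.exp q) :=
      htend.eventually_lt_const (ENNReal.ofReal_pos.mpr (Real.exp_pos q))
    obtain ⟨k0, hk0⟩ := eventually_atTop.mp hev
    set k : ℕ := max k0 (⌈1/γ⌉₊ + 1) with hkdef
    have hk1 : 1 ≤ k := le_trans (Nat.le_add_left 1 _) (le_max_right _ _)
    have hkcast : 1/γ ≤ (k : ℝ) := by
      have h1 : ((⌈1/γ⌉₊ + 1 : ℕ) : ℝ) ≤ (k : ℝ) := by
        exact_mod_cast le_max_right k0 (⌈1/γ⌉₊ + 1)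
      have h2 := Nat.le_ceil (1/γ)
      push_cast at h1
      linarith
    have hkpos : (0 : ℝ) < k := lt_of_lt_of_le (by positivity) hkcast
    have hkγ : 1/(k : ℝ) ≤ γ := by
      rw [div_le_iff₀ hkpos]
      calc (1 : ℝ) = γ * (1/γ) := by field_simp
        _ ≤ γ * k := mul_le_mul_of_nonneg_left hkcast hγpos.le
    have hρ : μ (B k) < ENNReal.ofReal (Real.exp q) := hk0 k (le_max_left _ _)
    have hk1r : (1 : ℝ) ≤ (k : ℝ) := by exact_mod_cast hk1
    refine ⟨k, Set.mem_Ici.mpr hk1, ?_⟩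
    refine limsup_le_of_le (by isBoundedDefault) ?_
    filter_upwards [eventually_ge_atTop 1] with n hn
    have hnpos : (0 : ℝ) < n := by exact_mod_cast hn
    set E := {ω | Mn X n ω ∈ Vk k f} with hEdef
    set m : ℕ := ⌈γ/2 * n⌉₊ with hmdef
    -- Step A : deterministic inclusion
    have hsubE : E ⊆ {ω | m ≤ ((Finset.range n).filter
        (fun i => γ * (k : ℝ) / 2 ≤ |X i ω|)).card} := by
      intro ω hω
      have hgap : awGap (epiE (Mn X n ω)) (epiE f) (k : ℝ) < 1 / (k : ℝ) := hω
      have hx : ((0 : ℝ), t) ∈ closedBall (0 : ℝ × ℝ) (k : ℝ) := by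
        rw [mem_closedBall, Prod.dist_eq]
        simp only [Prod.fst_zero, Prod.snd_zero, Real.dist_eq, sub_zero, sub_self, abs_zero]
        rw [sup_le_iff, abs_of_nonneg ht0]
        constructor <;> linarith
      have hxF : ((0 : ℝ), t) ∈ epiE f := by
        show f 0 ≤ ((t : ℝ) : EReal)
        rw [← hcoe]
        exact_mod_cast hct
      have hdF : infDist ((0 : ℝ), t) (epiE f) = 0 := infDist_zero_of_mem hxF
      have hbound := abs_infDist_sub_le_awGap (A := epiE (Mn X n ω)) (B := epiE f) hx
      rw [hdF, sub_zero] at hbound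
      have hdg : infDist ((0 : ℝ), t) (epiE (Mn X n ω)) < 1 / (k : ℝ) :=
        lt_of_le_of_lt (le_trans (le_abs_self _) hbound) hgap
      have hgne : (epiE (Mn X n ω)).Nonempty := by
        refine ⟨(0, (1 : ℝ)), ?_⟩
        show Mn X n ω 0 ≤ ((1 : ℝ) : EReal)
        rw [hMn0 n hn ω]
      obtain ⟨⟨θ, b⟩, hyg, hyd⟩ := (infDist_lt_iff hgne).mp hdg
      rw [Prod.dist_eq] at hyd
      obtain ⟨hd1, hd2⟩ := sup_lt_iff.mp hyd
      have hθ : |θ| < 1/(k : ℝ) := by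
        rw [Real.dist_eq, zero_sub, abs_neg] at hd1
        exact hd1
      have hb : b < t + 1/(k : ℝ) := by
        rw [Real.dist_eq] at hd2
        have := le_abs_self (b - t)
        rw [abs_sub_comm] at this
        linarith
      have hgθ : (n : ℝ)⁻¹ * ∑ i ∈ Finset.range n, Real.exp (θ * X i ω) ≤ b := by
        have hmem : Mn X n ω θ ≤ ((b : ℝ) : EReal) := hyg
        simp only [Mn] at hmem
        exact_mod_cast hmem
      have hsum : ∑ i ∈ Finset.range n, Real.exp (θ * X i ω) ≤ (n : ℝ) * (1 - γ) := by
        have hb2 : b ≤ 1 - γ := by linarith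
        have h := mul_le_mul_of_nonneg_left (le_trans hgθ hb2) hnpos.le
        rwa [← mul_assoc, mul_inv_cancel₀ hnpos.ne', one_mul] at h
      have hcount := count_big n γ hγpos hγ1 (fun i => θ * X i ω) hsum
      have hincl : (Finset.range n).filter (fun i => θ * X i ω ≤ -(γ/2)) ⊆
          (Finset.range n).filter (fun i => γ * (k : ℝ) / 2 ≤ |X i ω|) := by
        intro i hi
        rw [Finset.mem_filter] at hi ⊢
        refine ⟨hi.1, ?_⟩
        have hθi := hi.2
        have hθne : θ ≠ 0 := by
          rintro rfl
          rw [zero_mul] at hθi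
          linarith
        have hθpos : 0 < |θ| := abs_pos.mpr hθne
        have h1 : γ/2 ≤ |θ * X i ω| := by
          rw [abs_of_nonpos (le_trans hθi (by linarith))]
          linarith
        rw [abs_mul] at h1
        have hθk : |θ| * (k : ℝ) < 1 := (lt_div_iff₀ hkpos).mp hθ
        have hk' : (k : ℝ) < 1/|θ| := by
          rw [lt_div_iff₀ hθpos, mul_comm]
          exact hθk
        have h2 : γ/2 * (1/|θ|) ≤ |X i ω| := by
          rw [mul_one_div, div_le_iff₀ hθpos, mul_comm]
          exact h1
        nlinarith [mul_le_mul_of_nonneg_left hk'.le (by positivity : (0:ℝ) ≤ γ/2)]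
      have hfin2 : γ/2 * n ≤ (((Finset.range n).filter
          (fun i => γ * (k : ℝ) / 2 ≤ |X i ω|)).card : ℝ) :=
        le_trans hcount (by exact_mod_cast Finset.card_le_card hincl)
      exact Nat.ceil_le.mpr hfin2
    have hPbound : P E ≤ 2 ^ n * (μ (B k)) ^ m :=
      le_trans (measure_mono hsubE)
        (prob_bound P X μ hmeas hid hindep (γ * (k : ℝ) / 2) n m)
    by_cases hP0 : P E = 0
    · rw [hP0]
      rw [show elog 0 = ⊥ from if_pos rfl,
        EReal.mul_bot_of_pos (by exact_mod_cast EReal.coe_pos.mpr (by positivity : (0:ℝ) < (n:ℝ)⁻¹))]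
      exact bot_le
    · set ρ : ℝ := (μ (B k)).toReal with hρdef
      have hμfin : μ (B k) ≠ ⊤ := measure_ne_top μ _
      have hρle : ρ ≤ Real.exp q := by
        have h := ENNReal.toReal_mono ENNReal.ofReal_ne_top hρ.le
        rwa [ENNReal.toReal_ofReal (Real.exp_pos q).le] at h
      have hm1 : 1 ≤ m := Nat.ceil_pos.mpr (by positivity)
      have hμne : μ (B k) ≠ 0 := by
        intro h0
        rw [h0, zero_pow (by omega : m ≠ 0), mul_zero] at hPbound
        exact hP0 (le_antisymm hPbound bot_le)
      have hρpos : 0 < ρ := ENNReal.toReal_pos hμne hμfin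
      have hPEfin : P E ≠ ⊤ := measure_ne_top P _
      have hPEreal : (P E).toReal ≤ 2 ^ n * ρ ^ m := by
        have h2 : ((2 : ℝ≥0∞) ^ n * (μ (B k)) ^ m).toReal = 2 ^ n * ρ ^ m := by
          rw [ENNReal.toReal_mul, ENNReal.toReal_pow, ENNReal.toReal_pow,
            ENNReal.toReal_ofNat]
        rw [← h2]
        exact ENNReal.toReal_mono
          (ENNReal.mul_ne_top (ENNReal.pow_ne_top (by norm_num)) (ENNReal.pow_ne_top hμfin))
          hPbound
      have hlogle : Real.log (P E).toReal ≤ (n : ℝ) * r := by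
        have hPpos : 0 < (P E).toReal := ENNReal.toReal_pos hP0 hPEfin
        have h3 : Real.log (P E).toReal ≤ Real.log (2 ^ n * ρ ^ m) :=
          Real.log_le_log hPpos hPEreal
        rw [Real.log_mul (by positivity) (by positivity), Real.log_pow, Real.log_pow] at h3
        have hlogρ : Real.log ρ ≤ q := by
          calc Real.log ρ ≤ Real.log (Real.exp q) := Real.log_le_log hρpos hρle
            _ = q := Real.log_exp q
        have hq0 : q ≤ 0 := min_le_left _ _
        have hq2 : q ≤ (r - Real.log 2) / (γ/2) := min_le_right _ _
        have hmlb : γ/2 * (n : ℝ) ≤ (m : ℝ) := Nat.le_ceil _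
        have e1 : (m : ℝ) * Real.log ρ ≤ (m : ℝ) * q :=
          mul_le_mul_of_nonneg_left hlogρ (Nat.cast_nonneg m)
        have e2 : (m : ℝ) * q ≤ (γ/2 * n) * q := by nlinarith
        have e3 : (γ/2 * (n : ℝ)) * q ≤ (n : ℝ) * (r - Real.log 2) := by
          have hγ2 : (0 : ℝ) < γ/2 := by positivity
          have h4 : γ/2 * q ≤ r - Real.log 2 := by
            have h5 := mul_le_mul_of_nonneg_left hq2 hγ2.le
            rwa [mul_div_cancel₀ _ hγ2.ne'] at h5
          nlinarith
        linarith
      have hfinal : (n : ℝ)⁻¹ * Real.log (P E).toReal ≤ r := by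
        have h := mul_le_mul_of_nonneg_left hlogle (inv_nonneg.mpr hnpos.le)
        rwa [← mul_assoc, inv_mul_cancel₀ hnpos.ne', one_mul] at h
      calc ((((n : ℝ)⁻¹ : ℝ) : EReal) * elog (P E))
          = (((n : ℝ)⁻¹ * Real.log (P E).toReal : ℝ) : EReal) := by
            rw [show elog (P E) = ((Real.log (P E).toReal : ℝ) : EReal) from if_neg hP0,
              ← EReal.coe_mul]
        _ ≤ (r : EReal) := EReal.coe_le_coe_iff.mpr hfinal
  · -- CASE 1 < f 0 : the event is empty for a suitable k
    have hc_gt : 1 < c := by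
      rw [← hcoe] at hgt
      exact_mod_cast hgt
    set t : ℝ := (1 + c) / 2 with htdef
    set e : ℝ := (c - 1) / 4 with hedef
    have hepos : 0 < e := by rw [hedef]; linarith
    have ht1 : 1 < t := by rw [htdef]; linarith
    have htec : ((t + e : ℝ) : EReal) < f 0 := by
      rw [← hcoe]
      exact_mod_cast (by rw [htdef, hedef]; linarith : t + e < c)
    obtain ⟨δ, hδpos, hδ⟩ := Metric.eventually_nhds_iff.mp (hlsc 0 _ htec)
    set η : ℝ := min δ e with hηdef
    have hηpos : 0 < η := lt_min hδpos hepos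
    have hinf : η ≤ infDist ((0 : ℝ), t) (epiE f) := by
      by_contra hcon
      push_neg at hcon
      obtain ⟨⟨θ, b⟩, hyin, hyd⟩ := (infDist_lt_iff hepiF_ne).mp hcon
      rw [Prod.dist_eq] at hyd
      obtain ⟨hd1, hd2⟩ := sup_lt_iff.mp hyd
      have hθ : dist θ 0 < δ := by
        rw [Real.dist_eq, zero_sub, abs_neg] at hd1
        rw [Real.dist_eq, sub_zero]
        exact lt_of_lt_of_le hd1 (min_le_left _ _)
      have hfθ : ((t + e : ℝ) : EReal) < f θ := hδ hθ
      have hbe : t + e < b := by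
        have hle : f θ ≤ ((b : ℝ) : EReal) := hyin
        exact_mod_cast lt_of_lt_of_le hfθ hle
      rw [Real.dist_eq] at hd2
      have h1 : b - t ≤ |t - b| := by rw [abs_sub_comm]; exact le_abs_self _
      have h2 : |t - b| < e := lt_of_lt_of_le hd2 (min_le_right _ _)
      linarith
    set k : ℕ := ⌈max t (1/η)⌉₊ + 1 with hkdef
    have hk1 : 1 ≤ k := Nat.le_add_left 1 _
    have hkcast : max t (1/η) < (k : ℝ) := by
      have := Nat.le_ceil (max t (1/η))
      have h1 : ((⌈max t (1/η)⌉₊ : ℕ) : ℝ) + 1 ≤ ((k : ℕ) : ℝ) := by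
        exact_mod_cast Nat.le_of_eq rfl
      linarith
    have hkt : t ≤ (k : ℝ) := le_of_lt (lt_of_le_of_lt (le_max_left _ _) hkcast)
    have hkpos : (0 : ℝ) < k := by
      have : (1 : ℝ) ≤ (k : ℝ) := by exact_mod_cast hk1
      linarith
    have hinvk : 1/(k : ℝ) < η := by
      rw [div_lt_iff₀ hkpos, mul_comm]
      have h1 : 1/η < (k : ℝ) := lt_of_le_of_lt (le_max_right _ _) hkcast
      have h2 : 1/η * η < (k : ℝ) * η := mul_lt_mul_of_pos_right h1 hηpos
      rw [one_div, inv_mul_cancel₀ hηpos.ne'] at h2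
      linarith
    refine ⟨k, Set.mem_Ici.mpr hk1, ?_⟩
    refine limsup_le_of_le (by isBoundedDefault) ?_
    filter_upwards [eventually_ge_atTop 1] with n hn
    have hPzero : P {ω | Mn X n ω ∈ Vk k f} = 0 := by
      have hempty : {ω | Mn X n ω ∈ Vk k f} = ∅ := by
        ext ω
        simp only [Set.mem_setOf_eq, Set.mem_empty_iff_false, iff_false]
        intro hω
        have hgap : awGap (epiE (Mn X n ω)) (epiE f) (k : ℝ) < 1 / (k : ℝ) := hω
        have hx : ((0 : ℝ), t) ∈ closedBall (0 : ℝ × ℝ) (k : ℝ) := by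
          rw [mem_closedBall, Prod.dist_eq]
          simp only [Prod.fst_zero, Prod.snd_zero, Real.dist_eq, sub_zero, sub_self, abs_zero]
          rw [sup_le_iff, abs_of_nonneg (by linarith : (0:ℝ) ≤ t)]
          constructor <;> linarith
        have hgmem : ((0 : ℝ), t) ∈ epiE (Mn X n ω) := by
          show Mn X n ω 0 ≤ ((t : ℝ) : EReal)
          rw [hMn0 n hn ω]
          exact_mod_cast ht1.le
        have h0 : infDist ((0 : ℝ), t) (epiE (Mn X n ω)) = 0 := infDist_zero_of_mem hgmem
        have hbound := abs_infDist_sub_le_awGap (A := epiE (Mn X n ω)) (B := epiE f) hx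
        rw [h0, zero_sub, abs_neg, abs_of_nonneg infDist_nonneg] at hbound
        linarith
      rw [hempty]
      exact measure_empty
    rw [hPzero, show elog 0 = ⊥ from if_pos rfl,
      EReal.mul_bot_of_pos (by
        have hnpos : (0 : ℝ) < n := by exact_mod_cast hn
        exact_mod_cast EReal.coe_pos.mpr (by positivity : (0:ℝ) < (n:ℝ)⁻¹))]
    exact bot_le

end
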